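/- For any A ∈ M_n(ℂ), the numerical range F(A) is convex. -/

import Mathlib

open Matrix

/-- The map `f_A(x) = x* A x` on `ℂ^n` (with the Euclidean norm). -/
noncomputable def numRangeMap {n : ℕ} (A : Matrix (Fin n) (Fin n) ℂ)
    (x : EuclideanSpace ℂ (Fin n)) : ℂ :=
  star (x : Fin n → ℂ) ⬝ᵥ A.mulVec (x : Fin n → ℂ)

/-- The numerical range `F(A)`. -/
noncomputable def numRange {n : ℕ} (A : Matrix (Fin n) (Fin n) ℂ) : Set ℂ :=
  numRangeMap A '' Metric.sphere 0 1

namespace THaux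
variable {n : ℕ}
variable {n : ℕ}

noncomputable def T (B : Matrix (Fin n) (Fin n) ℂ) (x y : Fin n → ℂ) : ℂ :=
  star x ⬝ᵥ B.mulVec y

lemma T_add_left (B : Matrix (Fin n) (Fin n) ℂ) (x y z : Fin n → ℂ) :
    T B (x + y) z = T B x z + T B y z := by
  simp [T, star_add, add_dotProduct]

lemma T_add_right (B : Matrix (Fin n) (Fin n) ℂ) (x y z : Fin n → ℂ) :
    T B x (y + z) = T B x y + T B x z := by
  simp [T, mulVec_add, dotProduct_add]

lemma T_smul_left (B : Matrix (Fin n) (Fin n) ℂ) (c : ℂ) (x y : Fin n → ℂ) :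
    T B (c • x) y = starRingEnd ℂ c * T B x y := by
  simp [T, star_smul, smul_dotProduct, smul_eq_mul, Complex.star_def]

lemma T_smul_right (B : Matrix (Fin n) (Fin n) ℂ) (c : ℂ) (x y : Fin n → ℂ) :
    T B x (c • y) = c * T B x y := by
  simp [T, mulVec_smul, dotProduct_smul, smul_eq_mul]

lemma T_expand (B : Matrix (Fin n) (Fin n) ℂ) (a b : ℂ) (x y : Fin n → ℂ) :
    T B (a • x + b • y) (a • x + b • y)
      = starRingEnd ℂ a * a * T B x x + starRingEnd ℂ a * b * T B x y
        + starRingEnd ℂ b * a * T B y x + starRingEnd ℂ b * b * T B y y := by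
  simp only [T_add_left, T_add_right, T_smul_left, T_smul_right]
  ring

lemma key (B : Matrix (Fin n) (Fin n) ℂ) (x y : EuclideanSpace ℂ (Fin n))
    (hx : ‖x‖ = 1) (hy : ‖y‖ = 1)
    (hBx : T B x x = 1) (hBy : T B y y = 0)
    (t : ℝ) (ht : t ∈ Set.Icc (0:ℝ) 1) :
    ∃ w : EuclideanSpace ℂ (Fin n), ‖w‖ = 1 ∧ T B w w = (t : ℂ) := by
  classical
  -- choose the phase β
  set c : ℂ := T B x y with hc
  set d : ℂ := T B y x with hd
  set u : ℂ := c - starRingEnd ℂ d with hu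
  set β : ℂ := if u = 0 then 1 else u / (‖u‖ : ℂ) with hβdef
  have hβ : ‖β‖ = 1 := by
    by_cases h : u = 0
    · simp [hβdef, h]
    · simp only [hβdef, if_neg h]
      rw [norm_div, Complex.norm_real, Real.norm_eq_abs,
        abs_of_nonneg (norm_nonneg u)]
      exact div_self (norm_ne_zero_iff.mpr h)
  have hβu : (starRingEnd ℂ β * u).im = 0 := by
    by_cases h : u = 0
    · simp [h]
    · have hval : starRingEnd ℂ β * u = ((‖u‖ : ℝ) : ℂ) := by
        simp only [hβdef, if_neg h, map_div₀, Complex.conj_ofReal]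
        rw [div_mul_eq_mul_div, mul_comm, RCLike.mul_conj]
        have habs : ‖u‖ ≠ 0 := norm_ne_zero_iff.mpr h
        have hxne : ((‖u‖ : ℝ) : ℂ) ≠ 0 := Complex.ofReal_ne_zero.mpr habs
        field_simp
        simp
      rw [hval]
      exact Complex.ofReal_im _
  -- the rotated vector
  set x' : EuclideanSpace ℂ (Fin n) := β • x with hx'def
  have hx' : ‖x'‖ = 1 := by rw [hx'def, norm_smul, hβ, hx, mul_one]
  have hββ : starRingEnd ℂ β * β = 1 := by
    rw [RCLike.conj_mul, hβ]
    norm_num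
  have hTx' : T B x' x' = 1 := by
    rw [hx'def, WithLp.ofLp_smul, T_smul_left, T_smul_right, ← mul_assoc, hββ, one_mul, hBx]
  -- cross term
  set r : ℂ := T B x' y + T B y x' with hr
  have hrim : r.im = 0 := by
    have h1 : T B x' y = starRingEnd ℂ β * c := by rw [hx'def, WithLp.ofLp_smul, T_smul_left, hc]
    have h2 : T B y x' = β * d := by rw [hx'def, WithLp.ofLp_smul, T_smul_right, hd]
    have : r = starRingEnd ℂ β * u + (β * d + starRingEnd ℂ β * starRingEnd ℂ d) := by
      rw [hr, h1, h2, hu]; ring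
    rw [this, Complex.add_im, hβu, zero_add]
    have : β * d + starRingEnd ℂ β * starRingEnd ℂ d
        = β * d + starRingEnd ℂ (β * d) := by rw [_root_.map_mul]
    rw [this, Complex.add_im, Complex.conj_im]
    ring
  -- the path
  set z : ℝ → EuclideanSpace ℂ (Fin n) :=
    fun s => (s : ℂ) • x' + ((1 - s : ℝ) : ℂ) • y with hzdef
  have hTz : ∀ s : ℝ, T B (z s) (z s)
      = (s : ℂ) ^ 2 + (s : ℂ) * ((1 - s : ℝ) : ℂ) * r := by
    intro s
    rw [hzdef]
    simp only [WithLp.ofLp_add, WithLp.ofLp_smul]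
    rw [T_expand B ((s : ℂ)) (((1 - s : ℝ) : ℂ)) x' y]
    rw [Complex.conj_ofReal, Complex.conj_ofReal, hTx', hBy, hr]
    ring
  have hzne : ∀ s ∈ Set.Icc (0:ℝ) 1, z s ≠ 0 := by
    intro s hs h0
    have hsx : (s : ℂ) • x' = ((s - 1 : ℝ) : ℂ) • y := by
      have : (s : ℂ) • x' = -(((1 - s : ℝ) : ℂ) • y) := by
        rw [eq_neg_iff_add_eq_zero]; rw [hzdef] at h0; exact h0
      rw [this, ← neg_smul]
      congr 1
      push_cast; ring
    have hnorm : |s| = |s - 1| := by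
      have h1 : ‖(s : ℂ) • x'‖ = |s| := by
        rw [norm_smul, hx', mul_one, Complex.norm_real, Real.norm_eq_abs]
      have h2 : ‖((s - 1 : ℝ) : ℂ) • y‖ = |s - 1| := by
        rw [norm_smul, hy, mul_one, Complex.norm_real, Real.norm_eq_abs]
      rw [← h1, ← h2, hsx]
    have hs0 : 0 ≤ s := hs.1
    have hs1 : s ≤ 1 := hs.2
    have hshalf : s = 1 / 2 := by
      rw [abs_of_nonneg hs0, abs_of_nonpos (by linarith)] at hnorm
      linarith
    have hs2 : (2 : ℂ) * (s : ℂ) = 1 := by rw [hshalf]; norm_num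
    have hs3 : (2 : ℂ) * ((s - 1 : ℝ) : ℂ) = -1 := by rw [hshalf]; push_cast; norm_num
    have hxy : x' = (-1 : ℂ) • y := by
      calc x' = ((2 : ℂ) * (s : ℂ)) • x' := by rw [hs2, one_smul]
        _ = (2 : ℂ) • ((s : ℂ) • x') := by rw [← smul_smul]
        _ = (2 : ℂ) • (((s - 1 : ℝ) : ℂ) • y) := by rw [hsx]
        _ = ((2 : ℂ) * ((s - 1 : ℝ) : ℂ)) • y := by rw [smul_smul]
        _ = (-1 : ℂ) • y := by rw [hs3]
    have : (1 : ℂ) = 0 := by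
      rw [← hTx', hxy, WithLp.ofLp_smul, T_smul_left, T_smul_right, hBy]
      simp
    exact one_ne_zero this
  -- continuity & IVT
  have hzc : Continuous z := by
    rw [hzdef]; fun_prop
  have hg : ContinuousOn
      (fun s : ℝ => (‖z s‖ ^ 2)⁻¹ * (s ^ 2 + s * (1 - s) * r.re)) (Set.Icc 0 1) := by
    apply ContinuousOn.mul
    · apply ContinuousOn.inv₀
      · exact ((hzc.norm.pow 2).continuousOn)
      · intro s hs
        exact pow_ne_zero 2 (norm_ne_zero_iff.mpr (hzne s hs))
    · fun_prop
  set g : ℝ → ℝ := fun s => (‖z s‖ ^ 2)⁻¹ * (s ^ 2 + s * (1 - s) * r.re) with hgdef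
  have hz0 : z 0 = y := by
    rw [hzdef]; simp
  have hz1 : z 1 = x' := by
    rw [hzdef]; simp
  have hg0 : g 0 = 0 := by simp [hgdef]
  have hg1 : g 1 = 1 := by simp [hgdef, hz1, hx']
  have hmem : t ∈ Set.Icc (g 0) (g 1) := by rw [hg0, hg1]; exact ht
  obtain ⟨s, hs, hgs⟩ := intermediate_value_Icc (by norm_num : (0:ℝ) ≤ 1) hg hmem
  -- the witness
  have hzs := hzne s hs
  have hns : ‖z s‖ ≠ 0 := norm_ne_zero_iff.mpr hzs
  refine ⟨((‖z s‖⁻¹ : ℝ) : ℂ) • z s, ?_, ?_⟩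
  · rw [norm_smul, Complex.norm_real, Real.norm_eq_abs,
      abs_of_nonneg (inv_nonneg.mpr (norm_nonneg _))]
    field_simp
  · rw [WithLp.ofLp_smul, T_smul_left, T_smul_right, Complex.conj_ofReal, hTz s]
    have hrre : r = (r.re : ℂ) := by
      apply Complex.ext <;> simp [hrim]
    rw [hrre]
    rw [← hgs, hgdef]
    push_cast
    ring

lemma unit_dot (z : EuclideanSpace ℂ (Fin n)) (hz : ‖z‖ = 1) :
    star (z : Fin n → ℂ) ⬝ᵥ (z : Fin n → ℂ) = 1 := by
  have := EuclideanSpace.inner_eq_star_dotProduct (𝕜 := ℂ) z z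
  rw [inner_self_eq_norm_sq_to_K, hz] at this
  rw [dotProduct_comm]
  simpa using this.symm

lemma numRangeMap_eq_T (A : Matrix (Fin n) (Fin n) ℂ) (z : EuclideanSpace ℂ (Fin n)) :
    numRangeMap A z = T A z z := rfl

lemma T_shift (A : Matrix (Fin n) (Fin n) ℂ) (q e : ℂ)
    (z : EuclideanSpace ℂ (Fin n)) (hz : ‖z‖ = 1) :
    T (e • (A - q • (1 : Matrix (Fin n) (Fin n) ℂ))) z z = e * (T A z z - q) := by
  unfold T
  rw [smul_mulVec, dotProduct_smul, smul_eq_mul, sub_mulVec, dotProduct_sub,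
    smul_mulVec, one_mulVec, dotProduct_smul, smul_eq_mul, unit_dot z hz]
  ring

end THaux

/-- The Toeplitz–Hausdorff theorem: the numerical range is convex. -/
theorem stmt_4 {n : ℕ} (A : Matrix (Fin n) (Fin n) ℂ) :
    Convex ℝ (numRange A) := by
  rintro p ⟨x, hxs, rfl⟩ q ⟨y, hys, rfl⟩ a b ha hb hab
  rw [mem_sphere_zero_iff_norm] at hxs hys
  by_cases hpq : numRangeMap A x = numRangeMap A y
  · rw [hpq, ← add_smul, hab, one_smul]
    exact ⟨y, by rwa [mem_sphere_zero_iff_norm], rfl⟩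
  · set p := numRangeMap A x with hp
    set q := numRangeMap A y with hq
    have hne : p - q ≠ 0 := sub_ne_zero.mpr hpq
    set B : Matrix (Fin n) (Fin n) ℂ :=
      (p - q)⁻¹ • (A - q • (1 : Matrix (Fin n) (Fin n) ℂ)) with hB
    have hBx : THaux.T B x x = 1 := by
      rw [hB, THaux.T_shift A q _ x hxs, ← THaux.numRangeMap_eq_T, ← hp]
      field_simp
    have hBy : THaux.T B y y = 0 := by
      rw [hB, THaux.T_shift A q _ y hys, ← THaux.numRangeMap_eq_T, ← hq]
      simp
    have ha1 : a ∈ Set.Icc (0:ℝ) 1 := ⟨ha, by linarith⟩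
    obtain ⟨w, hw, hTw⟩ := THaux.key B x y hxs hys hBx hBy a ha1
    refine ⟨w, by rwa [mem_sphere_zero_iff_norm], ?_⟩
    have hw2 : (p - q)⁻¹ * (THaux.T A w w - q) = (a : ℂ) := by
      rw [← THaux.T_shift A q _ w hw, ← hB, hTw]
    have hAw : THaux.T A w w = q + (a : ℂ) * (p - q) := by
      field_simp at hw2
      linear_combination hw2
    rw [THaux.numRangeMap_eq_T, hAw]
    have hb' : (b : ℂ) = 1 - (a : ℂ) := by
      have : (a : ℂ) + (b : ℂ) = 1 := by
        rw [← Complex.ofReal_add, hab, Complex.ofReal_one]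
      linear_combination this
    rw [Complex.real_smul, Complex.real_smul, hb']
    ring
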